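/- arXiv:1707.09639 — 3 statements merged into one kernel-verified Lean document; each statement's English description precedes it below -/
import Mathlib

section
/- Let A and B be nonempty closed convex sets in a real Hilbert space such that the distance between them is attained, i.e., there exist a ∈ A, b ∈ B with ‖a − b‖ = inf{‖x − y‖ : x ∈ A, y ∈ B}. Then a point a ∈ A satisfies ‖a − P_B(a)‖ = inf{‖x − y‖ : x ∈ A, y ∈ B} if and only if a is a fixed point of the composition P_A ∘ P_B. -/
open scoped RealInnerProductSpace

/-- Variational characterization of a nearest point on a convex set. -/
lemma proj_char_aux {E : Type*} [NormedAddCommGroup E] [InnerProductSpace ℝ E]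
    {K : Set E} (hK : Convex ℝ K) {u v : E} (hv : v ∈ K)
    (hmin : ∀ y ∈ K, ‖u - v‖ ≤ ‖u - y‖) :
    ∀ w ∈ K, ⟪u - v, w - v⟫ ≤ 0 := by
  haveI : Nonempty K := ⟨⟨v, hv⟩⟩
  have h : ‖u - v‖ = ⨅ w : K, ‖u - w‖ :=
    le_antisymm (le_ciInf fun w => hmin w w.2)
      (ciInf_le (f := fun w : K => ‖u - w‖) ⟨0, by rintro r ⟨w, rfl⟩; exact norm_nonneg _⟩ ⟨v, hv⟩)
  exact (norm_eq_iInf_iff_real_inner_le_zero hK hv).mp h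

/-- Uniqueness of nearest points on a convex set. -/
lemma proj_unique_aux {E : Type*} [NormedAddCommGroup E] [InnerProductSpace ℝ E]
    {K : Set E} (hK : Convex ℝ K) {u v w : E} (hv : v ∈ K) (hw : w ∈ K)
    (hminv : ∀ y ∈ K, ‖u - v‖ ≤ ‖u - y‖) (hminw : ∀ y ∈ K, ‖u - w‖ ≤ ‖u - y‖) :
    v = w := by
  have h1 := proj_char_aux hK hv hminv w hw
  have h2 := proj_char_aux hK hw hminw v hv
  have e : ⟪u - v, w - v⟫ + ⟪u - w, v - w⟫ = ‖w - v‖ ^ 2 := by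
    have h3 : ⟪u - w, v - w⟫ = ⟪w - u, w - v⟫ := by
      rw [← neg_sub w u, ← neg_sub w v, inner_neg_neg]
    rw [h3, ← inner_add_left, ← real_inner_self_eq_norm_sq]
    congr 1
    abel
  have hsq : ‖w - v‖ ^ 2 ≤ 0 := by linarith
  have hz : ‖w - v‖ = 0 := by nlinarith [norm_nonneg (w - v)]
  have : w - v = 0 := norm_eq_zero.mp hz
  have := sub_eq_zero.mp this
  exact this.symm

theorem stmt_1
    {E : Type*} [NormedAddCommGroup E] [InnerProductSpace ℝ E] [CompleteSpace E]
    (A B : Set E) (hA : A.Nonempty) (hB : B.Nonempty)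
    (hAc : IsClosed A) (hBc : IsClosed B)
    (hAconv : Convex ℝ A) (hBconv : Convex ℝ B)
    (PA PB : E → E)
    (hPA : ∀ x, PA x ∈ A ∧ ∀ y ∈ A, ‖x - PA x‖ ≤ ‖x - y‖)
    (hPB : ∀ x, PB x ∈ B ∧ ∀ y ∈ B, ‖x - PB x‖ ≤ ‖x - y‖)
    (hattain : ∃ a ∈ A, ∃ b ∈ B,
      ‖a - b‖ = sInf {r : ℝ | ∃ x ∈ A, ∃ y ∈ B, r = ‖x - y‖}) :
    ∀ a ∈ A, (‖a - PB a‖ = sInf {r : ℝ | ∃ x ∈ A, ∃ y ∈ B, r = ‖x - y‖}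
      ↔ PA (PB a) = a) := by
  set S : Set ℝ := {r : ℝ | ∃ x ∈ A, ∃ y ∈ B, r = ‖x - y‖} with hS
  have hSbdd : BddBelow S := ⟨0, by rintro r ⟨x, hx, y, hy, rfl⟩; exact norm_nonneg _⟩
  have hdle : ∀ x ∈ A, ∀ y ∈ B, sInf S ≤ ‖x - y‖ := fun x hx y hy =>
    csInf_le hSbdd ⟨x, hx, y, hy, rfl⟩
  intro a ha
  constructor
  · -- forward: a at distance d from PB a implies fixed point
    intro h
    set b := PB a with hb
    have hbB : b ∈ B := (hPB a).1
    -- both a and PA b minimize distance from b to A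
    have hmina : ∀ y ∈ A, ‖b - a‖ ≤ ‖b - y‖ := by
      intro y hy
      have : ‖b - a‖ = sInf S := by rw [norm_sub_rev]; exact h
      rw [this, norm_sub_rev]
      exact hdle y hy b hbB
    exact proj_unique_aux hAconv (hPA b).1 ha (hPA b).2 hmina
  · -- backward
    intro h
    set b := PB a with hb
    have hbB : b ∈ B := (hPB a).1
    obtain ⟨a₀, ha₀, b₀, hb₀, hd⟩ := hattain
    -- variational inequalities
    have hia : ⟪b - a, a₀ - a⟫ ≤ 0 := by
      have := proj_char_aux hAconv (u := b) (v := a) (h ▸ (hPA b).1) ?_ a₀ ha₀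
      · exact this
      · intro y hy
        have := (hPA b).2 y hy
        rwa [h] at this
    have hib : ⟪a - b, b₀ - b⟫ ≤ 0 := proj_char_aux hBconv (hPB a).1 (hPB a).2 b₀ hb₀
    have key : ‖a - b‖ ^ 2 ≤ ⟪a - b, a₀ - b₀⟫ := by
      have e : ⟪a - b, a₀ - b₀⟫ + ⟪b - a, a₀ - a⟫ + ⟪a - b, b₀ - b⟫ = ‖a - b‖ ^ 2 := by
        have h1 : ⟪b - a, a₀ - a⟫ = ⟪a - b, a - a₀⟫ := by
          rw [← neg_sub a b, ← neg_sub a a₀, inner_neg_neg]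
        rw [h1, ← inner_add_right, ← inner_add_right, ← real_inner_self_eq_norm_sq]
        congr 1
        abel
      linarith
    have hcs : ⟪a - b, a₀ - b₀⟫ ≤ ‖a - b‖ * ‖a₀ - b₀‖ := real_inner_le_norm _ _
    have hdlow : sInf S ≤ ‖a - b‖ := hdle a ha b hbB
    have hn : 0 ≤ ‖a - b‖ := norm_nonneg _
    -- ‖a - b‖ ≤ d
    have hle : ‖a - b‖ ≤ sInf S := by
      rw [← hd] at hdlow ⊢
      nlinarith [norm_nonneg (a₀ - b₀)]
    linarith
end

section
/- Let A and B be nonempty closed convex subsets of ℝ^d whose distance is attained, let v be the projection of the origin onto the closed convex set A − B = {x − y : x ∈ A, y ∈ B}, and set T := A ∩ (B + v). Then T is exactly the set of points of A nearest to B, i.e., T = {a ∈ A : ‖a − P_B(a)‖ = inf{‖x − y‖ : x ∈ A, y ∈ B}}. -/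
theorem stmt_10
    {d : ℕ}
    (A B : Set (EuclideanSpace ℝ (Fin d))) (hA : A.Nonempty) (hB : B.Nonempty)
    (hAc : IsClosed A) (hBc : IsClosed B)
    (hAconv : Convex ℝ A) (hBconv : Convex ℝ B)
    (PB : EuclideanSpace ℝ (Fin d) → EuclideanSpace ℝ (Fin d))
    (hPB : ∀ x, PB x ∈ B ∧ ∀ y ∈ B, ‖x - PB x‖ ≤ ‖x - y‖)
    (hattain : ∃ a ∈ A, ∃ b ∈ B,
      ‖a - b‖ = sInf {r : ℝ | ∃ x ∈ A, ∃ y ∈ B, r = ‖x - y‖})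
    (v : EuclideanSpace ℝ (Fin d))
    (hv : v ∈ {z | ∃ x ∈ A, ∃ y ∈ B, z = x - y} ∧
      ∀ w ∈ {z | ∃ x ∈ A, ∃ y ∈ B, z = x - y}, ‖v‖ ≤ ‖w‖) :
    A ∩ ((fun b => b + v) '' B)
      = {a ∈ A | ‖a - PB a‖ = sInf {r : ℝ | ∃ x ∈ A, ∃ y ∈ B, r = ‖x - y‖}} := by
  obtain ⟨hvS, hvmin⟩ := hv
  have hSconv : Convex ℝ {z : EuclideanSpace ℝ (Fin d) | ∃ x ∈ A, ∃ y ∈ B, z = x - y} := by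
    rintro z1 ⟨x1, hx1, y1, hy1, rfl⟩ z2 ⟨x2, hx2, y2, hy2, rfl⟩ s t hs ht hst
    exact ⟨s • x1 + t • x2, hAconv hx1 hx2 hs ht hst,
      s • y1 + t • y2, hBconv hy1 hy2 hs ht hst,
      by rw [smul_sub, smul_sub]; abel⟩
  have hdelta : sInf {r : ℝ | ∃ x ∈ A, ∃ y ∈ B, r = ‖x - y‖} = ‖v‖ := by
    apply le_antisymm
    · obtain ⟨x, hx, y, hy, rfl⟩ := hvS
      exact csInf_le ⟨0, by rintro r ⟨x, _, y, _, rfl⟩; exact norm_nonneg _⟩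
        ⟨x, hx, y, hy, rfl⟩
    · apply le_csInf
      · obtain ⟨x, hx, y, hy, h⟩ := hvS
        exact ⟨‖x - y‖, x, hx, y, hy, rfl⟩
      · rintro r ⟨x, hx, y, hy, rfl⟩
        exact hvmin _ ⟨x, hx, y, hy, rfl⟩
  ext a
  simp only [Set.mem_inter_iff, Set.mem_image, Set.mem_setOf_eq]
  constructor
  · rintro ⟨haA, b, hbB, rfl⟩
    refine ⟨haA, le_antisymm ?_ ?_⟩
    · have := (hPB (b + v)).2 b hbB
      rw [hdelta]
      simpa [add_sub_cancel_left] using this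
    · rw [hdelta]
      exact hvmin _ ⟨b + v, haA, PB (b + v), (hPB (b + v)).1, rfl⟩
  · rintro ⟨haA, hnorm⟩
    refine ⟨haA, a - v, ?_, by abel⟩
    have hmem : a - PB a ∈ {z : EuclideanSpace ℝ (Fin d) | ∃ x ∈ A, ∃ y ∈ B, z = x - y} :=
      ⟨a, haA, PB a, (hPB a).1, rfl⟩
    have h1 : ‖a - PB a‖ = ‖v‖ := by rw [hnorm, hdelta]
    have heq : a - PB a = v := by
      by_contra hne
      have hmid : (1/2 : ℝ) • (a - PB a) + (1/2 : ℝ) • v ∈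
          {z : EuclideanSpace ℝ (Fin d) | ∃ x ∈ A, ∃ y ∈ B, z = x - y} :=
        hSconv hmem hvS (by norm_num) (by norm_num) (by norm_num)
      have hle := hvmin _ hmid
      have hm : ‖(1/2 : ℝ) • (a - PB a) + (1/2 : ℝ) • v‖ = (1/2) * ‖(a - PB a) + v‖ := by
        rw [← smul_add, norm_smul]
        norm_num
      have hp := parallelogram_law_with_norm ℝ (a - PB a) v
      have hdpos : 0 < ‖(a - PB a) - v‖ := by
        rw [norm_pos_iff, sub_ne_zero]
        exact hne
      rw [hm] at hle
      nlinarith [norm_nonneg ((a - PB a) + v), norm_nonneg v]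
    have : a - v = PB a := by
      rw [← heq]; abel
    rw [this]
    exact (hPB a).1
end

section
/- Let A and B be nonempty closed convex subsets of a real Hilbert space whose distance d(A,B) is attained, and let v be the element of minimal norm of the closure of A − B. Then for every a ∈ A with ‖a − P_B(a)‖ = d(A,B), one has P_B(a) = a − v. -/
open Pointwise


theorem stmt_11
    {E : Type*} [NormedAddCommGroup E] [InnerProductSpace ℝ E] [CompleteSpace E]
    (A B : Set E) (hA : A.Nonempty) (hB : B.Nonempty)
    (hAc : IsClosed A) (hBc : IsClosed B)
    (hAconv : Convex ℝ A) (hBconv : Convex ℝ B)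
    (PB : E → E)
    (hPB : ∀ x, PB x ∈ B ∧ ∀ y ∈ B, ‖x - PB x‖ ≤ ‖x - y‖)
    (hattain : ∃ a ∈ A, ∃ b ∈ B,
      ‖a - b‖ = sInf {r : ℝ | ∃ x ∈ A, ∃ y ∈ B, r = ‖x - y‖})
    (v : E)
    (hv : v ∈ closure {z | ∃ x ∈ A, ∃ y ∈ B, z = x - y} ∧
      ∀ w ∈ closure {z | ∃ x ∈ A, ∃ y ∈ B, z = x - y}, ‖v‖ ≤ ‖w‖) :
    ∀ a ∈ A, ‖a - PB a‖ = sInf {r : ℝ | ∃ x ∈ A, ∃ y ∈ B, r = ‖x - y‖} →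
      PB a = a - v := by
  intro a ha hd
  set D : Set E := {z | ∃ x ∈ A, ∃ y ∈ B, z = x - y} with hD
  set R : Set ℝ := {r : ℝ | ∃ x ∈ A, ∃ y ∈ B, r = ‖x - y‖} with hR
  have hRne : R.Nonempty := by
    obtain ⟨x, hx⟩ := hA; obtain ⟨y, hy⟩ := hB
    exact ⟨‖x - y‖, x, hx, y, hy, rfl⟩
  have hRbdd : BddBelow R := by
    refine ⟨0, ?_⟩
    rintro r ⟨x, hx, y, hy, rfl⟩
    exact norm_nonneg _
  -- ‖v‖ ≤ sInf R
  have h1 : ‖v‖ ≤ sInf R := by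
    apply le_csInf hRne
    rintro r ⟨x, hx, y, hy, rfl⟩
    exact hv.2 _ (subset_closure ⟨x, hx, y, hy, rfl⟩)
  -- sInf R ≤ ‖v‖
  have h2 : sInf R ≤ ‖v‖ := by
    have : v ∈ {z : E | sInf R ≤ ‖z‖} := by
      apply closure_minimal _ (isClosed_le continuous_const continuous_norm) hv.1
      rintro z ⟨x, hx, y, hy, rfl⟩
      exact csInf_le hRbdd ⟨x, hx, y, hy, rfl⟩
    exact this
  have hnv : ‖v‖ = sInf R := le_antisymm h1 h2
  -- w := a - PB a is in closure D with minimal norm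
  set w : E := a - PB a with hw
  have hwD : w ∈ closure D := subset_closure ⟨a, ha, PB a, (hPB a).1, rfl⟩
  have hnw : ‖w‖ = ‖v‖ := by rw [hnv]; exact hd
  -- convexity of closure D
  have hDconv : Convex ℝ D := by
    have : D = A - B := by
      ext z; constructor
      · rintro ⟨x, hx, y, hy, rfl⟩; exact ⟨x, hx, y, hy, rfl⟩
      · rintro ⟨x, hx, y, hy, rfl⟩; exact ⟨x, hx, y, hy, rfl⟩
    rw [this]; exact hAconv.sub hBconv
  have hmid : (1/2 : ℝ) • v + (1/2 : ℝ) • w ∈ closure D :=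
    hDconv.closure hv.1 hwD (by norm_num) (by norm_num) (by norm_num)
  have hmn : ‖v‖ ≤ ‖(1/2 : ℝ) • v + (1/2 : ℝ) • w‖ := hv.2 _ hmid
  -- parallelogram: conclude v = w
  have hvw : v = w := by
    have hpar : ‖v + w‖ ^ 2 + ‖v - w‖ ^ 2 = 2 * (‖v‖ ^ 2 + ‖w‖ ^ 2) := by
      have := parallelogram_law_with_norm ℝ v w
      nlinarith [this]
    have hvwn : 2 * ‖v‖ ≤ ‖v + w‖ := by
      have : (1/2 : ℝ) • v + (1/2 : ℝ) • w = (1/2 : ℝ) • (v + w) := by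
        rw [smul_add]
      rw [this, norm_smul] at hmn
      simp at hmn
      linarith
    have hsq : ‖v - w‖ ^ 2 ≤ 0 := by
      nlinarith [norm_nonneg v, norm_nonneg (v + w)]
    have : ‖v - w‖ = 0 := by
      nlinarith [norm_nonneg (v - w)]
    exact sub_eq_zero.mp (norm_eq_zero.mp this)
  rw [hvw, hw]
  abel
end
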